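/- Let $S = K[x_1,\ldots,x_n]$ and let $I \subset S$ be an $\mathfrak{m}$-primary stable monomial ideal. Let $d = \min\{\deg u : u \in G(I),\ m(u) = n\}$, where $G(I)$ is the minimal monomial generating set. If every minimal generator $u \in G(I)$ with $\deg u > d$ satisfies $m(u) = n$, then $x_n$ is a weak Lefschetz element on $S/I$. -/

import Mathlib

open MvPolynomial

variable {K : Type*} [Field K] {n : ℕ}

/-- The total degree of an exponent vector. -/
def mdeg {n : ℕ} (m : Fin n →₀ ℕ) : ℕ := m.sum fun _ e => e

/-- `I` is a monomial ideal: it contains every monomial of each of its elements. -/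
def IsMonomialIdeal (I : Ideal (MvPolynomial (Fin n) K)) : Prop :=
  ∀ f ∈ I, ∀ m ∈ f.support, (monomial m (1 : K)) ∈ I

/-- `I` is stable: for every monomial `u ∈ I` with largest dividing variable `x_k`,
and every `i ≤ k`, the monomial `(x_i / x_k) * u` lies in `I`. -/
def IsStableIdeal (I : Ideal (MvPolynomial (Fin n) K)) : Prop :=
  ∀ m : Fin n →₀ ℕ, (monomial m (1 : K)) ∈ I →
    ∀ k i : Fin n, m k ≠ 0 → (∀ k', k < k' → m k' = 0) → i ≤ k →
      (monomial (m + Finsupp.single i 1 - Finsupp.single k 1) (1 : K)) ∈ I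

/-- `I` is strongly stable: for every monomial `u ∈ I`, every variable `x_k` dividing `u`
and every `i ≤ k`, the monomial `(x_i / x_k) * u` lies in `I`. -/
def IsStronglyStableIdeal (I : Ideal (MvPolynomial (Fin n) K)) : Prop :=
  ∀ m : Fin n →₀ ℕ, (monomial m (1 : K)) ∈ I →
    ∀ k i : Fin n, m k ≠ 0 → i ≤ k →
      (monomial (m + Finsupp.single i 1 - Finsupp.single k 1) (1 : K)) ∈ I

/-- `v <_lex u` for exponent vectors, lex order with `x_1 > x_2 > ⋯ > x_n`. -/
def lexLt {n : ℕ} (v u : Fin n →₀ ℕ) : Prop :=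
  ∃ i : Fin n, (∀ j < i, v j = u j) ∧ v i < u i

/-- `I` is a lexsegment ideal. -/
def IsLexsegmentIdeal (I : Ideal (MvPolynomial (Fin n) K)) : Prop :=
  IsMonomialIdeal I ∧
    ∀ u v : Fin n →₀ ℕ, (monomial u (1 : K)) ∈ I → mdeg v = mdeg u → lexLt u v →
      (monomial v (1 : K)) ∈ I

/-- The degree `j` piece of `S/I`, as the image of the degree `j` homogeneous polynomials. -/
noncomputable def Qpiece (I : Ideal (MvPolynomial (Fin n) K)) (j : ℕ) :
    Submodule K (MvPolynomial (Fin n) K ⧸ I) :=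
  (homogeneousSubmodule (Fin n) K j).map (Ideal.Quotient.mkₐ K I).toLinearMap

/-- Multiplication by `g` maps `(S/I)_j` injectively (to `(S/I)_{j'}`). -/
def QInj (I : Ideal (MvPolynomial (Fin n) K)) (g : MvPolynomial (Fin n) K)
    (j _j' : ℕ) : Prop :=
  ∀ f₁ ∈ Qpiece I j, ∀ f₂ ∈ Qpiece I j,
    Ideal.Quotient.mk I g * f₁ = Ideal.Quotient.mk I g * f₂ → f₁ = f₂

/-- Multiplication by `g` maps `(S/I)_j` onto `(S/I)_{j'}`. -/
def QSurj (I : Ideal (MvPolynomial (Fin n) K)) (g : MvPolynomial (Fin n) K)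
    (j j' : ℕ) : Prop :=
  ∀ h ∈ Qpiece I j', ∃ f ∈ Qpiece I j, Ideal.Quotient.mk I g * f = h

/-- Multiplication by `g` from `(S/I)_j` to `(S/I)_{j'}` has maximal rank. -/
def MulMaxRank (I : Ideal (MvPolynomial (Fin n) K)) (g : MvPolynomial (Fin n) K)
    (j j' : ℕ) : Prop :=
  QInj I g j j' ∨ QSurj I g j j'

/-- The monomial with exponent vector `m` is a minimal generator of the monomial
ideal `I`. -/
def IsMinGen (I : Ideal (MvPolynomial (Fin n) K)) (m : Fin n →₀ ℕ) : Prop :=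
  monomial m (1 : K) ∈ I ∧
    ∀ i : Fin n, m i ≠ 0 → monomial (m - Finsupp.single i 1) (1 : K) ∉ I


section AuxLemmas

variable {K : Type*} [Field K] {n : ℕ}

lemma mdeg_eq_degree (m : Fin n →₀ ℕ) : mdeg m = Finsupp.degree m := rfl

lemma mdeg_add (a b : Fin n →₀ ℕ) : mdeg (a + b) = mdeg a + mdeg b := by
  simp [mdeg_eq_degree, Finsupp.degree_eq_weight_one, map_add]

lemma mdeg_single (i : Fin n) (k : ℕ) : mdeg (Finsupp.single i k) = k := by
  simp [mdeg, Finsupp.sum_single_index]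

lemma mdeg_le_of_le {a b : Fin n →₀ ℕ} (h : a ≤ b) : mdeg a ≤ mdeg b := by
  have hb : b = a + (b - a) := by rw [add_tsub_cancel_of_le h]
  rw [hb, mdeg_add]; omega

lemma apply_le_mdeg (m : Fin n →₀ ℕ) (i : Fin n) : m i ≤ mdeg m := by
  rw [mdeg_eq_degree]; exact Finsupp.le_degree i m

lemma mdeg_sub_single {m : Fin n →₀ ℕ} {i : Fin n} (h : m i ≠ 0) :
    mdeg (m - Finsupp.single i 1) + 1 = mdeg m := by
  have hle : Finsupp.single i 1 ≤ m := by
    intro j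
    rcases eq_or_ne j i with rfl | hj
    · simpa [Finsupp.single_apply] using Nat.one_le_iff_ne_zero.2 h
    · simp [Finsupp.single_apply, Ne.symm hj]
  have hm : m - Finsupp.single i 1 + Finsupp.single i 1 = m := tsub_add_cancel_of_le hle
  calc mdeg (m - Finsupp.single i 1) + 1
      = mdeg (m - Finsupp.single i 1) + mdeg (Finsupp.single i 1) := by rw [mdeg_single]
    _ = mdeg (m - Finsupp.single i 1 + Finsupp.single i 1) := (mdeg_add _ _).symm
    _ = mdeg m := by rw [hm]

lemma mdeg_eq_weight (m : Fin n →₀ ℕ) : mdeg m = Finsupp.weight 1 m := by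
  rw [mdeg_eq_degree, Finsupp.degree_eq_weight_one]; rfl

lemma mdeg_of_homogeneous {p : MvPolynomial (Fin n) K} {j : ℕ}
    (hp : p.IsHomogeneous j) {m : Fin n →₀ ℕ} (hm : m ∈ p.support) : mdeg m = j := by
  rw [mdeg_eq_weight]
  exact hp (mem_support_iff.1 hm)

lemma monomial_mem_of_le (I : Ideal (MvPolynomial (Fin n) K)) {u v : Fin n →₀ ℕ}
    (h : monomial u (1 : K) ∈ I) (huv : u ≤ v) : monomial v (1 : K) ∈ I := by
  have : monomial v (1 : K) = monomial (v - u) (1 : K) * monomial u (1 : K) := by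
    rw [monomial_mul, one_mul, tsub_add_cancel_of_le huv]
  rw [this]
  exact I.mul_mem_left _ h

lemma monomial_coeff_mem (I : Ideal (MvPolynomial (Fin n) K)) {m : Fin n →₀ ℕ} (c : K)
    (h : monomial m (1 : K) ∈ I) : monomial m c ∈ I := by
  have : monomial m c = monomial 0 c * monomial m (1 : K) := by
    rw [monomial_mul, zero_add, mul_one]
  rw [this]
  exact I.mul_mem_left _ h

lemma exists_minGen (I : Ideal (MvPolynomial (Fin n) K)) (m : Fin n →₀ ℕ)
    (h : monomial m (1 : K) ∈ I) : ∃ u, IsMinGen I u ∧ u ≤ m := by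
  suffices H : ∀ N (m : Fin n →₀ ℕ), mdeg m ≤ N → monomial m (1 : K) ∈ I →
      ∃ u, IsMinGen I u ∧ u ≤ m from H (mdeg m) m le_rfl h
  intro N
  induction N with
  | zero =>
    intro m hm h
    exact ⟨m, ⟨h, fun i hi => by
      have := apply_le_mdeg m i; omega⟩, le_rfl⟩
  | succ N ih =>
    intro m hm h
    by_cases hmin : ∀ i : Fin n, m i ≠ 0 → monomial (m - Finsupp.single i 1) (1 : K) ∉ I
    · exact ⟨m, ⟨h, hmin⟩, le_rfl⟩
    · push_neg at hmin
      obtain ⟨i, hi, hmem⟩ := hmin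
      obtain ⟨u, hu, hle⟩ := ih _ (by have := mdeg_sub_single hi; omega) hmem
      exact ⟨u, hu, hle.trans tsub_le_self⟩

lemma exists_bound (I : Ideal (MvPolynomial (Fin n) K)) (hmon : IsMonomialIdeal I)
    (hfd : FiniteDimensional K (MvPolynomial (Fin n) K ⧸ I)) :
    ∃ N : ℕ, ∀ m : Fin n →₀ ℕ, N ≤ mdeg m → monomial m (1 : K) ∈ I := by
  classical
  set T : Set (Fin n →₀ ℕ) := {m | monomial m (1 : K) ∉ I} with hT
  have hli : LinearIndependent K
      (fun m : T => Ideal.Quotient.mkₐ K I (monomial m.1 (1 : K))) := by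
    rw [linearIndependent_iff']
    intro s g hsum i hi
    by_contra hg
    set P : MvPolynomial (Fin n) K := ∑ m ∈ s, g m • monomial m.1 (1 : K) with hP
    have hPI : P ∈ I := by
      have : Ideal.Quotient.mkₐ K I P = 0 := by
        rw [hP, map_sum]
        simpa [map_smul] using hsum
      rwa [Ideal.Quotient.mkₐ_eq_mk, Ideal.Quotient.eq_zero_iff_mem] at this
    have hcoeff : coeff i.1 P = g i := by
      rw [hP, coeff_sum]
      rw [Finset.sum_eq_single i]
      · simp [coeff_smul, coeff_monomial]
      · intro m _ hmi
        have : m.1 ≠ i.1 := fun h => hmi (Subtype.ext h)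
        simp [coeff_smul, coeff_monomial, this]
      · intro h; exact absurd hi h
    have hsupp : i.1 ∈ P.support := by
      rw [mem_support_iff, hcoeff]; exact hg
    exact i.2 (hmon P hPI i.1 hsupp)
  have hfin : T.Finite := by
    have : Finite T := hli.finite
    exact Set.toFinite T
  refine ⟨hfin.toFinset.sup mdeg + 1, fun m hm => ?_⟩
  by_contra hmem
  have hmT : m ∈ hfin.toFinset := by simpa [hT] using hmem
  have := Finset.le_sup (f := mdeg) hmT
  omega

/-- Every `x_n`-free monomial of degree at least `d` lies in `I`. -/
lemma key_mem (I : Ideal (MvPolynomial (Fin n) K)) (hst : IsStableIdeal I)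
    (d : ℕ) (hd1 : 1 ≤ d) (nn : Fin n)
    (hgen' : ∀ m : Fin n →₀ ℕ, IsMinGen I m → d < mdeg m → m nn ≠ 0)
    (N : ℕ) (hN : ∀ m : Fin n →₀ ℕ, N ≤ mdeg m → monomial m (1 : K) ∈ I) :
    ∀ v : Fin n →₀ ℕ, v nn = 0 → d ≤ mdeg v → monomial v (1 : K) ∈ I := by
  suffices H : ∀ t : ℕ, ∀ v : Fin n →₀ ℕ, N ≤ mdeg v + t → v nn = 0 → d ≤ mdeg v →
      monomial v (1 : K) ∈ I by
    intro v hvnn hvd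
    exact H N v (by omega) hvnn hvd
  intro t
  induction t with
  | zero => intro v hvt _ _; exact hN v (by omega)
  | succ t ih =>
    intro v hvt hvnn hvd
    by_contra hv
    have hup : ∀ i : Fin n, i ≠ nn → monomial (v + Finsupp.single i 1) (1 : K) ∈ I := by
      intro i hi
      refine ih _ (by rw [mdeg_add, mdeg_single]; omega) ?_ ?_
      · simp [Finsupp.add_apply, Finsupp.single_apply, hvnn, Ne.symm, hi]
      · rw [mdeg_add]; omega
    have hv0 : v ≠ 0 := by
      intro h
      rw [h] at hvd
      simp [mdeg] at hvd
      omega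
    have hsupp : v.support.Nonempty := by
      rwa [Finsupp.support_nonempty_iff]
    set k := v.support.max' hsupp with hk
    have hkmem : k ∈ v.support := v.support.max'_mem hsupp
    have hkmax : ∀ j ∈ v.support, j ≤ k := fun j hj => v.support.le_max' j hj
    have hkv : v k ≠ 0 := Finsupp.mem_support_iff.1 hkmem
    have hknn : k ≠ nn := fun h => hkv (h ▸ hvnn)
    have hvk : monomial (v + Finsupp.single k 1) (1 : K) ∈ I := hup k hknn
    obtain ⟨u, humin, hule⟩ := exists_minGen I _ hvk
    have hunle : ¬ u ≤ v := fun h => hv (monomial_mem_of_le I humin.1 h)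
    have huk : u k = v k + 1 := by
      rw [Finsupp.le_def] at hunle
      push_neg at hunle
      obtain ⟨j, hj⟩ := hunle
      have hjle := hule j
      rcases eq_or_ne j k with rfl | hjk
      · have := hule k
        rw [Finsupp.add_apply, Finsupp.single_apply, if_pos rfl] at this
        omega
      · rw [Finsupp.add_apply, Finsupp.single_apply, if_neg (Ne.symm hjk), add_zero] at hjle
        omega
    have hjle' : ∀ j, j ≠ k → u j ≤ v j := by
      intro j hjk
      have := hule j
      rwa [Finsupp.add_apply, Finsupp.single_apply, if_neg (Ne.symm hjk), add_zero] at this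
    have hunn : u nn = 0 := by
      have := hjle' nn (Ne.symm hknn)
      omega
    have hudeg : mdeg u ≤ d := by
      by_contra h
      exact (hgen' u humin (by omega)) hunn
    have humax : ∀ k', k < k' → u k' = 0 := by
      intro k' hkk'
      have hv' : v k' = 0 := by
        by_contra h
        exact absurd (hkmax k' (Finsupp.mem_support_iff.2 h)) (not_le.2 hkk')
      have := hjle' k' (ne_of_gt hkk')
      omega
    by_cases hc : v + Finsupp.single k 1 = u
    · have : mdeg v + 1 = mdeg u := by
        rw [← hc, mdeg_add, mdeg_single]
      omega
    · obtain ⟨i, hci⟩ : ∃ i : Fin n, ((v + Finsupp.single k 1 - u : Fin n →₀ ℕ)) i ≠ 0 := by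
        by_contra h
        push_neg at h
        exact hc (le_antisymm (tsub_eq_zero_iff_le.1 (Finsupp.ext h)) hule)
      rw [Finsupp.tsub_apply, Finsupp.add_apply, Finsupp.single_apply] at hci
      have hik : i ≠ k := by
        rintro rfl
        rw [if_pos rfl, huk] at hci
        omega
      rw [if_neg (Ne.symm hik), add_zero] at hci
      have hiuv : u i < v i := by omega
      have hile : i ≤ k := hkmax i (Finsupp.mem_support_iff.2 (by omega))
      have hstab := hst u humin.1 k i (by omega) humax hile
      refine hv (monomial_mem_of_le I hstab ?_)
      intro j
      rw [Finsupp.tsub_apply, Finsupp.add_apply, Finsupp.single_apply, Finsupp.single_apply]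
      rcases eq_or_ne j k with rfl | hjk
      · rw [if_pos rfl, if_neg hik, huk]
        omega
      · rw [if_neg (Ne.symm hjk)]
        rcases eq_or_ne j i with rfl | hji
        · rw [if_pos rfl]
          have := hjle' j hjk
          omega
        · rw [if_neg (Ne.symm hji)]
          have := hjle' j hjk
          omega

/-- If `w ∉ I` but `x_n · w ∈ I`, then `d ≤ mdeg w + 1`. -/
lemma ker_bound (I : Ideal (MvPolynomial (Fin n) K)) (d : ℕ) (nn : Fin n)
    (hd2 : ∀ j' ∈ {j' : ℕ | ∃ m : Fin n →₀ ℕ, IsMinGen I m ∧ mdeg m = j' ∧ m nn ≠ 0}, d ≤ j')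
    {w : Fin n →₀ ℕ} (hw : monomial w (1 : K) ∉ I)
    (hwe : monomial (w + Finsupp.single nn 1) (1 : K) ∈ I) :
    d ≤ mdeg w + 1 := by
  obtain ⟨u, humin, hule⟩ := exists_minGen I _ hwe
  have hunle : ¬ u ≤ w := fun h => hw (monomial_mem_of_le I humin.1 h)
  have hunn : u nn ≠ 0 := by
    rw [Finsupp.le_def] at hunle
    push_neg at hunle
    obtain ⟨j, hj⟩ := hunle
    have hju := hule j
    rcases eq_or_ne j nn with rfl | hne
    · omega
    · rw [Finsupp.add_apply, Finsupp.single_apply, if_neg (Ne.symm hne), add_zero] at hju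
      omega
  have h1 : d ≤ mdeg u := hd2 _ ⟨u, humin, rfl, hunn⟩
  have h2 := mdeg_le_of_le hule
  rw [mdeg_add, mdeg_single] at h2
  omega

end AuxLemmas

/-- Let `I` be an `𝔪`-primary stable monomial ideal and `d` the least degree of a
minimal generator divisible by `x_n`. If every minimal generator of degree `> d` is
divisible by `x_n`, then `x_n` is a weak Lefschetz element on `S/I`. -/

theorem stmt_13 (hn : 1 ≤ n) (I : Ideal (MvPolynomial (Fin n) K))
    (hmon : IsMonomialIdeal I) (hst : IsStableIdeal I)
    (hfd : FiniteDimensional K (MvPolynomial (Fin n) K ⧸ I))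
    (d : ℕ)
    (hd : IsLeast {j : ℕ | ∃ m : Fin n →₀ ℕ,
        IsMinGen I m ∧ mdeg m = j ∧ m ⟨n - 1, by omega⟩ ≠ 0} d)
    (hgen : ∀ m : Fin n →₀ ℕ, IsMinGen I m → d < mdeg m → m ⟨n - 1, by omega⟩ ≠ 0) :
    ∀ j : ℕ, MulMaxRank I (X (⟨n - 1, by omega⟩ : Fin n)) j (j + 1) := by
  classical
  intro j
  set nn : Fin n := ⟨n - 1, by omega⟩ with hnn
  have hd' : IsLeast {j : ℕ | ∃ m : Fin n →₀ ℕ,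
      IsMinGen I m ∧ mdeg m = j ∧ m nn ≠ 0} d := hd
  have hgen' : ∀ m : Fin n →₀ ℕ, IsMinGen I m → d < mdeg m → m nn ≠ 0 := hgen
  have hd1 : 1 ≤ d := by
    obtain ⟨m, hmg, hmd, hmn⟩ := hd'.1
    have := apply_le_mdeg m nn
    omega
  obtain ⟨N, hN⟩ := exists_bound I hmon hfd
  by_cases hker : ∃ w : Fin n →₀ ℕ, mdeg w = j ∧ monomial w (1 : K) ∉ I ∧
      monomial (w + Finsupp.single nn 1) (1 : K) ∈ I
  · -- kernel in degree j is nonzero : multiplication is surjective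
    right
    obtain ⟨w, hwj, hwI, hwe⟩ := hker
    have hdj : d ≤ j + 1 := by
      have := ker_bound I d nn hd'.2 hwI hwe
      omega
    intro h hh
    rw [Qpiece, Submodule.mem_map] at hh
    obtain ⟨p, hp, rfl⟩ := hh
    rw [mem_homogeneousSubmodule] at hp
    set F : Finset (Fin n →₀ ℕ) := p.support.filter (fun m => monomial m (1 : K) ∉ I)
      with hF
    have hFnn : ∀ m ∈ F, m nn ≠ 0 := by
      intro m hm
      rw [hF, Finset.mem_filter] at hm
      intro h0
      exact hm.2 (key_mem I hst d hd1 nn hgen' N hN m h0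
        (by rw [mdeg_of_homogeneous hp hm.1]; omega))
    set f : MvPolynomial (Fin n) K :=
      ∑ m ∈ F, monomial (m - Finsupp.single nn 1) (coeff m p) with hf
    have hfhom : f ∈ homogeneousSubmodule (Fin n) K j := by
      rw [hf]
      refine Submodule.sum_mem _ fun m hm => ?_
      rw [mem_homogeneousSubmodule]
      refine isHomogeneous_monomial _ ?_
      rw [← mdeg_eq_degree]
      have h1 := mdeg_sub_single (hFnn m hm)
      have h2 : mdeg m = j + 1 := by
        rw [hF, Finset.mem_filter] at hm
        exact mdeg_of_homogeneous hp hm.1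
      omega
    have hXf : X nn * f = ∑ m ∈ F, monomial m (coeff m p) := by
      rw [hf, Finset.mul_sum]
      refine Finset.sum_congr rfl fun m hm => ?_
      rw [X, monomial_mul, one_mul]
      congr 1
      have hle : Finsupp.single nn 1 ≤ m := by
        rw [Finsupp.single_le_iff]
        have := hFnn m hm
        omega
      rw [add_comm, tsub_add_cancel_of_le hle]
    have hdiff : p - X nn * f ∈ I := by
      have hsplit : ∑ m ∈ F, monomial m (coeff m p) +
          ∑ m ∈ p.support.filter (fun m => ¬ monomial m (1 : K) ∉ I), monomial m (coeff m p)
          = p := by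
        rw [hF, Finset.sum_filter_add_sum_filter_not]
        exact (as_sum p).symm
      have hEq : p - X nn * f =
          ∑ m ∈ p.support.filter (fun m => ¬ monomial m (1 : K) ∉ I), monomial m (coeff m p) := by
        rw [hXf, sub_eq_iff_eq_add']
        exact hsplit.symm
      rw [hEq]
      refine Submodule.sum_mem _ fun m hm => ?_
      rw [Finset.mem_filter, not_not] at hm
      exact monomial_coeff_mem I _ hm.2
    refine ⟨(Ideal.Quotient.mkₐ K I).toLinearMap f, ?_, ?_⟩
    · rw [Qpiece, Submodule.mem_map]
      exact ⟨f, hfhom, rfl⟩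
    · simp only [AlgHom.toLinearMap_apply, Ideal.Quotient.mkₐ_eq_mk]
      rw [← map_mul, Ideal.Quotient.eq]
      have hneg := I.neg_mem hdiff
      rwa [neg_sub] at hneg
  · -- kernel in degree j is zero : multiplication is injective
    left
    intro f₁ hf₁ f₂ hf₂ heq
    rw [Qpiece, Submodule.mem_map] at hf₁ hf₂
    obtain ⟨p₁, hp₁, rfl⟩ := hf₁
    obtain ⟨p₂, hp₂, rfl⟩ := hf₂
    rw [mem_homogeneousSubmodule] at hp₁ hp₂
    simp only [AlgHom.toLinearMap_apply, Ideal.Quotient.mkₐ_eq_mk] at heq ⊢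
    have hXq : X nn * (p₁ - p₂) ∈ I := by
      have h0 : Ideal.Quotient.mk I (X nn * (p₁ - p₂)) = 0 := by
        rw [map_mul, map_sub, mul_sub, heq, sub_self]
      rwa [Ideal.Quotient.eq_zero_iff_mem] at h0
    have hq : p₁ - p₂ ∈ I := by
      have hmem : ∀ m ∈ (p₁ - p₂).support, monomial m (1 : K) ∈ I := by
        intro m hm
        have hmdeg : mdeg m = j := mdeg_of_homogeneous (hp₁.sub hp₂) hm
        have hup : monomial (m + Finsupp.single nn 1) (1 : K) ∈ I := by
          have hco : coeff (Finsupp.single nn 1 + m) (X nn * (p₁ - p₂)) ≠ 0 := by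
            rw [coeff_X_mul]
            exact mem_support_iff.1 hm
          have := hmon _ hXq _ (mem_support_iff.2 hco)
          rwa [add_comm] at this
        by_contra hmI
        exact hker ⟨m, hmdeg, hmI, hup⟩
      rw [as_sum (p₁ - p₂)]
      exact Submodule.sum_mem _ fun m hm => monomial_coeff_mem I _ (hmem m hm)
    rw [Ideal.Quotient.eq]
    exact hq
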